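/- Let A be a finite real linear arrangement satisfying the strong lattice property (P_C(A) is a lattice for every chamber C). Let C be a chamber, K a chamber with C ≤ K in P_C(A), and let A, B be atoms of the interval [C, K]. Then there exists an element T ∈ [C, K] with T = A ∨ B such that the interval [C, T] contains both A and B as its only atoms. -/

import Mathlib

open scoped Classical
noncomputable section

/-- Ambient real vector space `ℝ^d`. -/
abbrev EucV (d : ℕ) := Fin d → ℝ

/-- The complement of the arrangement given by the kernels of the linear forms in `A`. -/
def hypCompl {d : ℕ} (A : Finset (EucV d →ₗ[ℝ] ℝ)) : Set (EucV d) :=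
  {x | ∀ f ∈ A, f x ≠ 0}

/-- A chamber of the arrangement: a connected component of the complement. -/
def IsChamber {d : ℕ} (A : Finset (EucV d →ₗ[ℝ] ℝ)) (C : Set (EucV d)) : Prop :=
  ∃ x ∈ hypCompl A, C = connectedComponentIn (hypCompl A) x

/-- The hyperplane `ker f` separates `C` from `C'`. -/
def SepBy {d : ℕ} (f : EucV d →ₗ[ℝ] ℝ) (C C' : Set (EucV d)) : Prop :=
  ∃ x ∈ C, ∃ y ∈ C', f x * f y < 0

/-- The set `S(C,C')` of hyperplanes of `A` separating `C` from `C'`. -/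
def sepSet {d : ℕ} (A : Finset (EucV d →ₗ[ℝ] ℝ)) (C C' : Set (EucV d)) :
    Set (EucV d →ₗ[ℝ] ℝ) :=
  {f | f ∈ A ∧ SepBy f C C'}

section
variable {d : ℕ} {A : Finset (EucV d →ₗ[ℝ] ℝ)} {C Z W X : Set (EucV d)}
  {f g : EucV d →ₗ[ℝ] ℝ} {x y c z w : EucV d}

namespace JoinAux

variable {d : ℕ} {A : Finset (EucV d →ₗ[ℝ] ℝ)} {C Z W : Set (EucV d)}
  {f g : EucV d →ₗ[ℝ] ℝ} {x y c z w : EucV d}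

lemma chamber_subset (hC : IsChamber A C) : C ⊆ hypCompl A := by
  obtain ⟨x₀, hx₀, rfl⟩ := hC
  exact connectedComponentIn_subset _ _

lemma chamber_nonempty (hC : IsChamber A C) : ∃ c, c ∈ C := by
  obtain ⟨x₀, hx₀, rfl⟩ := hC
  exact ⟨x₀, mem_connectedComponentIn hx₀⟩

lemma sign_const (hC : IsChamber A C) (hf : f ∈ A) (hx : x ∈ C) (hy : y ∈ C) :
    0 < f x * f y := by
  have hxF := chamber_subset hC hx
  have hyF := chamber_subset hC hy
  have hfx : f x ≠ 0 := hxF f hf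
  have hfy : f y ≠ 0 := hyF f hf
  by_contra hcon
  push_neg at hcon
  have hlt : f x * f y < 0 := lt_of_le_of_ne hcon (mul_ne_zero hfx hfy)
  obtain ⟨x₀, hx₀, rfl⟩ := hC
  have hcont : Continuous (f : EucV d → ℝ) := f.continuous_of_finiteDimensional
  have hpre : IsPreconnected (connectedComponentIn (hypCompl A) x₀) :=
    isPreconnected_connectedComponentIn
  rcases le_total (f x) (f y) with hle | hle
  · have h0 : (0 : ℝ) ∈ Set.Icc (f x) (f y) := by
      constructor <;> nlinarith
    obtain ⟨z, hzC, hz0⟩ := hpre.intermediate_value hx hy hcont.continuousOn h0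
    exact connectedComponentIn_subset _ _ hzC f hf hz0
  · have h0 : (0 : ℝ) ∈ Set.Icc (f y) (f x) := by
      constructor <;> nlinarith
    obtain ⟨z, hzC, hz0⟩ := hpre.intermediate_value hy hx hcont.continuousOn h0
    exact connectedComponentIn_subset _ _ hzC f hf hz0

lemma mem_chamber (hc : c ∈ hypCompl A) (hy : ∀ f ∈ A, 0 < f c * f y) :
    y ∈ connectedComponentIn (hypCompl A) c := by
  set s : Set (EucV d) := {w | ∀ f ∈ A, 0 < f c * f w} with hs
  have hconv : Convex ℝ s := by
    intro u hu v hv a b ha hb hab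
    intro f hf
    have pu := hu f hf
    have pv := hv f hf
    have expand : f c * f (a • u + b • v) = a * (f c * f u) + b * (f c * f v) := by
      simp [map_add, map_smul, smul_eq_mul]; ring
    rw [Set.mem_setOf_eq] at *
    show 0 < f c * f (a • u + b • v)
    rw [expand]
    rcases eq_or_lt_of_le ha with h0 | h0
    · have hb1 : b = 1 := by linarith
      rw [← h0, hb1]; simpa using pv
    · nlinarith [mul_nonneg hb pv.le]
  have hsub : s ⊆ hypCompl A := by
    intro w hw f hf h0
    have := hw f hf
    rw [h0, mul_zero] at this
    exact lt_irrefl 0 this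
  have hcmem : c ∈ s := fun f hf => mul_self_pos.mpr (hc f hf)
  exact hconv.isPreconnected.subset_connectedComponentIn hcmem hsub hy

lemma chamber_eq (hZ : IsChamber A Z) (hW : IsChamber A W) (hz : z ∈ Z) (hw : w ∈ W)
    (h : ∀ f ∈ A, 0 < f z * f w) : Z = W := by
  obtain ⟨z₀, hz₀, rfl⟩ := hZ
  obtain ⟨w₀, hw₀, rfl⟩ := hW
  have hzF : z ∈ hypCompl A := connectedComponentIn_subset _ _ hz
  have e1 : connectedComponentIn (hypCompl A) z₀ = connectedComponentIn (hypCompl A) z :=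
    connectedComponentIn_eq hz
  have hw' : w ∈ connectedComponentIn (hypCompl A) z := mem_chamber hzF h
  have e2 : connectedComponentIn (hypCompl A) z = connectedComponentIn (hypCompl A) w :=
    connectedComponentIn_eq hw'
  have e3 : connectedComponentIn (hypCompl A) w₀ = connectedComponentIn (hypCompl A) w :=
    connectedComponentIn_eq hw
  rw [e1, e2, e3]

lemma sep_iff (hC : IsChamber A C) (hZ : IsChamber A Z) (hc : c ∈ C) (hz : z ∈ Z) :
    f ∈ sepSet A C Z ↔ f ∈ A ∧ f c * f z < 0 := by
  constructor
  · rintro ⟨hfA, x, hx, y, hy, hxy⟩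
    refine ⟨hfA, ?_⟩
    have h1 := sign_const hC hfA hx hc
    have h2 := sign_const hZ hfA hy hz
    nlinarith
  · rintro ⟨hfA, h⟩
    exact ⟨hfA, c, hc, z, hz, h⟩

lemma exists_point_off (hC : IsChamber A C) (h : EucV d →ₗ[ℝ] ℝ) (hh : h ≠ 0) :
    ∃ c ∈ C, h c ≠ 0 := by
  obtain ⟨c₀, hc₀, rfl⟩ := hC
  set s : Set (EucV d) := ⋂ f ∈ A, {w | 0 < f c₀ * f w} with hsdef
  have hopen : IsOpen s := by
    apply isOpen_biInter_finset
    intro f hf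
    have : {w : EucV d | 0 < f c₀ * f w} = (fun w => f c₀ * f w) ⁻¹' Set.Ioi 0 := rfl
    rw [this]
    exact isOpen_Ioi.preimage (continuous_const.mul f.continuous_of_finiteDimensional)
  have hcmem : c₀ ∈ s := by
    rw [hsdef, Set.mem_iInter₂]
    exact fun f hf => mul_self_pos.mpr (hc₀ f hf)
  have hsubC : s ⊆ connectedComponentIn (hypCompl A) c₀ := by
    intro w hw
    rw [hsdef, Set.mem_iInter₂] at hw
    exact mem_chamber hc₀ hw
  by_contra hcon
  push_neg at hcon
  have hker : s ⊆ (LinearMap.ker h : Set (EucV d)) := by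
    intro w hw
    simpa [LinearMap.mem_ker] using hcon w (hsubC hw)
  have hint : (interior ((LinearMap.ker h : Submodule ℝ (EucV d)) : Set (EucV d))).Nonempty :=
    ⟨c₀, mem_interior.mpr ⟨s, hker, hopen, hcmem⟩⟩
  have := (LinearMap.ker h).eq_top_of_nonempty_interior' hint
  exact hh (LinearMap.ker_eq_top.mp this)

end JoinAux

noncomputable section
section
variable {d : ℕ} {A : Finset (EucV d →ₗ[ℝ] ℝ)} {C Z W X : Set (EucV d)}
  {f g : EucV d →ₗ[ℝ] ℝ} {x y c z w : EucV d}
namespace JoinAux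

lemma cross {a b : ℝ} (h : a * b < 0) :
    0 < a / (a - b) ∧ a / (a - b) < 1 ∧ 0 < a * (a - b) ∧
      ∀ t : ℝ, (1 - t) * a + t * b = (a - b) * (a / (a - b) - t) := by
  have ha : a ≠ 0 := by intro h0; rw [h0, zero_mul] at h; exact lt_irrefl 0 h
  have hne : a - b ≠ 0 := by
    intro h0
    have hb : a = b := by linarith
    rw [hb] at h
    nlinarith [mul_self_nonneg b]
  have h3 : 0 < a * (a - b) := by nlinarith [mul_self_nonneg a, mul_self_pos.mpr ha]
  have h4 : 0 < (a - b) * (a - b) := mul_self_pos.mpr hne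
  have e1 : a / (a - b) = a * (a - b) / ((a - b) * (a - b)) := by field_simp
  have h1 : 0 < a / (a - b) := by rw [e1]; exact div_pos h3 h4
  have h2 : a / (a - b) < 1 := by
    have e2 : 1 - a / (a - b) = (-b) * (a - b) / ((a - b) * (a - b)) := by field_simp; ring
    have h5 : 0 < (-b) * (a - b) := by nlinarith [mul_self_nonneg b]
    have := div_pos h5 h4
    linarith [e2 ▸ this]
  refine ⟨h1, h2, h3, fun t => ?_⟩
  field_simp
  ring

lemma sep_nonempty (hC : IsChamber A C) (hZ : IsChamber A Z) (hne : Z ≠ C) :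
    (sepSet A C Z).Nonempty := by
  obtain ⟨c, hc⟩ := chamber_nonempty hC
  obtain ⟨z, hz⟩ := chamber_nonempty hZ
  by_contra hcon
  rw [Set.not_nonempty_iff_eq_empty] at hcon
  apply hne
  apply chamber_eq hZ hC hz hc
  intro f hf
  have h1 : f ∉ sepSet A C Z := by rw [hcon]; exact Set.notMem_empty f
  rw [sep_iff hC hZ hc hz] at h1
  push_neg at h1
  have h2 := h1 hf
  have hfc : f c ≠ 0 := chamber_subset hC hc f hf
  have hfz : f z ≠ 0 := chamber_subset hZ hz f hf
  have : f c * f z ≠ 0 := mul_ne_zero hfc hfz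
  have : 0 < f c * f z := lt_of_le_of_ne h2 (Ne.symm this)
  nlinarith

lemma exists_mid (hC : IsChamber A C) (hZ : IsChamber A Z) (hc : c ∈ C) (hz : z ∈ Z)
    (hf : f ∈ sepSet A C Z) (hg : g ∈ sepSet A C Z)
    (hlt : f c / (f c - f z) < g c / (g c - g z)) :
    ∃ W : Set (EucV d), IsChamber A W ∧ W ≠ C ∧ W ≠ Z ∧ sepSet A C W ⊆ sepSet A C Z := by
  classical
  set τ : (EucV d →ₗ[ℝ] ℝ) → ℝ := fun f' => f' c / (f' c - f' z) with hτ
  obtain ⟨t, htIoo, htbad⟩ :=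
    (Set.Ioo_infinite hlt).exists_notMem_finset (A.image τ)
  have hfcz : f c * f z < 0 := ((sep_iff hC hZ hc hz).mp hf).2
  have hgcz : g c * g z < 0 := ((sep_iff hC hZ hc hz).mp hg).2
  have ht0 : 0 < t := lt_trans (cross hfcz).1 htIoo.1
  have ht1 : t < 1 := lt_trans htIoo.2 (cross hgcz).2.1
  set p : EucV d := (1 - t) • c + t • z with hp
  have hev : ∀ f' : EucV d →ₗ[ℝ] ℝ, f' p = (1 - t) * f' c + t * f' z := by
    intro f'; simp [hp, map_add, map_smul, smul_eq_mul]
  have hnot : ∀ f' ∈ A, f' ∉ sepSet A C Z → 0 < f' c * f' p := by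
    intro f' hf'A hf'n
    have hne : ¬ (f' c * f' z < 0) := by
      intro hlt'; exact hf'n ((sep_iff hC hZ hc hz).mpr ⟨hf'A, hlt'⟩)
    have hfc : f' c ≠ 0 := chamber_subset hC hc f' hf'A
    have hfz : f' z ≠ 0 := chamber_subset hZ hz f' hf'A
    have hpos : 0 < f' c * f' z :=
      lt_of_le_of_ne (not_lt.mp hne) (Ne.symm (mul_ne_zero hfc hfz))
    rw [hev f']
    nlinarith [mul_pos ht0 hpos, mul_pos (sub_pos.mpr ht1) (mul_self_pos.mpr hfc)]
  have hsepeq : ∀ f' ∈ sepSet A C Z,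
      f' c * f' p = (f' c * (f' c - f' z)) * (τ f' - t) := by
    intro f' hf'
    have hcz : f' c * f' z < 0 := ((sep_iff hC hZ hc hz).mp hf').2
    have h4 := (cross hcz).2.2.2 t
    rw [hev f', h4, hτ]
    ring
  have hτne : ∀ f' ∈ sepSet A C Z, τ f' ≠ t := by
    intro f' hf' heq
    exact htbad (heq ▸ Finset.mem_image_of_mem τ hf'.1)
  have hpF : p ∈ hypCompl A := by
    intro f' hf'A
    by_cases hsep : f' ∈ sepSet A C Z
    · intro h0
      have := hsepeq f' hsep
      rw [h0, mul_zero] at this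
      have hcz : f' c * f' z < 0 := ((sep_iff hC hZ hc hz).mp hsep).2
      have h3 := (cross hcz).2.2.1
      have h5 : τ f' - t ≠ 0 := sub_ne_zero.mpr (hτne f' hsep)
      exact (mul_ne_zero (ne_of_gt h3) h5) this.symm
    · intro h0
      have := hnot f' hf'A hsep
      rw [h0, mul_zero] at this
      exact lt_irrefl 0 this
  refine ⟨connectedComponentIn (hypCompl A) p, ⟨p, hpF, rfl⟩, ?_, ?_, ?_⟩
  · -- W ≠ C
    intro hWC
    have hpC : p ∈ C := hWC ▸ mem_connectedComponentIn hpF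
    have h1 : f c * f p < 0 := by
      rw [hsepeq f hf]
      exact mul_neg_of_pos_of_neg (cross hfcz).2.2.1 (by simpa [hτ] using sub_neg.mpr htIoo.1)
    have h2 := sign_const hC hf.1 hc hpC
    nlinarith
  · -- W ≠ Z
    intro hWZ
    have hpZ : p ∈ Z := hWZ ▸ mem_connectedComponentIn hpF
    have h1 : 0 < g c * g p := by
      rw [hsepeq g hg]
      exact mul_pos (cross hgcz).2.2.1 (by simpa [hτ] using sub_pos.mpr htIoo.2)
    have h2 := sign_const hZ hg.1 hz hpZ
    nlinarith [mul_pos h1 h2, mul_self_nonneg (g p)]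
  · -- subset
    intro f' hf'W
    have hpW : p ∈ connectedComponentIn (hypCompl A) p := mem_connectedComponentIn hpF
    obtain ⟨hf'A, hlt'⟩ := (sep_iff hC ⟨p, hpF, rfl⟩ hc hpW).mp hf'W
    by_contra hns
    have := hnot f' hf'A hns
    nlinarith

lemma atom_prop (hC : IsChamber A C) (hZ : IsChamber A Z)
    (hatom : ¬ ∃ W : Set (EucV d), IsChamber A W ∧ W ≠ C ∧ W ≠ Z ∧
      sepSet A C W ⊆ sepSet A C Z)
    (hf : f ∈ sepSet A C Z) (hg : g ∈ sepSet A C Z) :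
    ∃ l : ℝ, l ≠ 0 ∧ g = l • f := by
  by_contra hcon
  obtain ⟨z, hz⟩ := chamber_nonempty hZ
  have hzF := chamber_subset hZ hz
  have hfz : f z ≠ 0 := hzF f hf.1
  have hgz : g z ≠ 0 := hzF g hg.1
  set h : EucV d →ₗ[ℝ] ℝ := g z • f - f z • g with hh
  have hhne : h ≠ 0 := by
    intro h0
    apply hcon
    refine ⟨g z / f z, div_ne_zero hgz hfz, ?_⟩
    apply LinearMap.ext
    intro v
    have h1 : h v = 0 := by rw [h0]; rfl
    rw [hh] at h1
    simp only [LinearMap.sub_apply, LinearMap.smul_apply, smul_eq_mul] at h1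
    have : g v = (g z / f z) * f v := by field_simp; linarith
    simpa [smul_eq_mul] using this
  obtain ⟨c, hcC, hhc⟩ := exists_point_off hC h hhne
  have hfcz : f c * f z < 0 := ((sep_iff hC hZ hcC hz).mp hf).2
  have hgcz : g c * g z < 0 := ((sep_iff hC hZ hcC hz).mp hg).2
  have hfd : f c - f z ≠ 0 := by
    intro h0
    have he : f c = f z := by linarith
    rw [he] at hfcz
    nlinarith [mul_self_nonneg (f z)]
  have hgd : g c - g z ≠ 0 := by
    intro h0
    have he : g c = g z := by linarith
    rw [he] at hgcz
    nlinarith [mul_self_nonneg (g z)]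
  have hne : f c / (f c - f z) ≠ g c / (g c - g z) := by
    intro heq
    rw [div_eq_div_iff hfd hgd] at heq
    apply hhc
    rw [hh]
    simp only [LinearMap.sub_apply, LinearMap.smul_apply, smul_eq_mul]
    nlinarith [heq]
  rcases lt_or_gt_of_ne hne with hlt | hlt
  · exact hatom (exists_mid hC hZ hcC hz hf hg hlt)
  · exact hatom (exists_mid hC hZ hcC hz hg hf hlt)

lemma atoms_disjoint (hC : IsChamber A C) (hX : IsChamber A X) (hZ : IsChamber A Z)
    (hXatom : ¬ ∃ W : Set (EucV d), IsChamber A W ∧ W ≠ C ∧ W ≠ X ∧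
      sepSet A C W ⊆ sepSet A C X)
    (hZatom : ¬ ∃ W : Set (EucV d), IsChamber A W ∧ W ≠ C ∧ W ≠ Z ∧
      sepSet A C W ⊆ sepSet A C Z)
    (hfX : f ∈ sepSet A C X) (hfZ : f ∈ sepSet A C Z) : X = Z := by
  obtain ⟨c, hc⟩ := chamber_nonempty hC
  obtain ⟨x, hx⟩ := chamber_nonempty hX
  obtain ⟨z, hz⟩ := chamber_nonempty hZ
  have hsame : ∀ g₀ : EucV d →ₗ[ℝ] ℝ, g₀ ∈ sepSet A C X → g₀ ∈ sepSet A C Z := by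
    intro g₀ hg₀
    obtain ⟨l, hl, rfl⟩ := atom_prop hC hX hXatom hfX hg₀
    have hfcz : f c * f z < 0 := ((sep_iff hC hZ hc hz).mp hfZ).2
    refine (sep_iff hC hZ hc hz).mpr ⟨hg₀.1, ?_⟩
    simp only [LinearMap.smul_apply, smul_eq_mul]
    nlinarith [mul_self_pos.mpr hl]
  have hsame' : ∀ g₀ : EucV d →ₗ[ℝ] ℝ, g₀ ∈ sepSet A C Z → g₀ ∈ sepSet A C X := by
    intro g₀ hg₀
    obtain ⟨l, hl, rfl⟩ := atom_prop hC hZ hZatom hfZ hg₀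
    have hfcx : f c * f x < 0 := ((sep_iff hC hX hc hx).mp hfX).2
    refine (sep_iff hC hX hc hx).mpr ⟨hg₀.1, ?_⟩
    simp only [LinearMap.smul_apply, smul_eq_mul]
    nlinarith [mul_self_pos.mpr hl]
  apply chamber_eq hX hZ hx hz
  intro g₀ hg₀A
  have hgc : g₀ c ≠ 0 := chamber_subset hC hc g₀ hg₀A
  by_cases hgX : g₀ ∈ sepSet A C X
  · have hgZ := hsame g₀ hgX
    have h1 : g₀ c * g₀ x < 0 := ((sep_iff hC hX hc hx).mp hgX).2
    have h2 : g₀ c * g₀ z < 0 := ((sep_iff hC hZ hc hz).mp hgZ).2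
    nlinarith [mul_pos_of_neg_of_neg h1 h2, mul_self_pos.mpr hgc]
  · have hgZ : g₀ ∉ sepSet A C Z := fun hmem => hgX (hsame' g₀ hmem)
    have h1 : ¬ (g₀ c * g₀ x < 0) := fun hlt => hgX ((sep_iff hC hX hc hx).mpr ⟨hg₀A, hlt⟩)
    have h2 : ¬ (g₀ c * g₀ z < 0) := fun hlt => hgZ ((sep_iff hC hZ hc hz).mpr ⟨hg₀A, hlt⟩)
    have hgx : g₀ x ≠ 0 := chamber_subset hX hx g₀ hg₀A
    have hgz : g₀ z ≠ 0 := chamber_subset hZ hz g₀ hg₀A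
    have p1 : 0 < g₀ c * g₀ x := lt_of_le_of_ne (not_lt.mp h1) (Ne.symm (mul_ne_zero hgc hgx))
    have p2 : 0 < g₀ c * g₀ z := lt_of_le_of_ne (not_lt.mp h2) (Ne.symm (mul_ne_zero hgc hgz))
    nlinarith [mul_pos p1 p2, mul_self_pos.mpr hgc]

lemma opp_chamber (hC : IsChamber A C) (hZ : IsChamber A Z) (hc : c ∈ C) (hz : z ∈ Z) :
    IsChamber A (connectedComponentIn (hypCompl A) (-z)) ∧
      ∀ f₀ : EucV d →ₗ[ℝ] ℝ,
        f₀ ∈ sepSet A C (connectedComponentIn (hypCompl A) (-z)) ↔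
          f₀ ∈ A ∧ f₀ ∉ sepSet A C Z := by
  have hzF := chamber_subset hZ hz
  have hnegF : -z ∈ hypCompl A := by
    intro f₀ hf₀
    simp only [map_neg, ne_eq, neg_eq_zero]
    exact hzF f₀ hf₀
  have hcham : IsChamber A (connectedComponentIn (hypCompl A) (-z)) := ⟨-z, hnegF, rfl⟩
  refine ⟨hcham, fun f₀ => ?_⟩
  have hmem : -z ∈ connectedComponentIn (hypCompl A) (-z) := mem_connectedComponentIn hnegF
  rw [sep_iff hC hcham hc hmem]
  constructor
  · rintro ⟨hf₀A, hlt⟩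
    refine ⟨hf₀A, fun hsep => ?_⟩
    have h2 : f₀ c * f₀ z < 0 := ((sep_iff hC hZ hc hz).mp hsep).2
    rw [map_neg] at hlt
    nlinarith
  · rintro ⟨hf₀A, hns⟩
    have h1 : ¬ (f₀ c * f₀ z < 0) := fun hlt => hns ((sep_iff hC hZ hc hz).mpr ⟨hf₀A, hlt⟩)
    have hgc : f₀ c ≠ 0 := chamber_subset hC hc f₀ hf₀A
    have hgz : f₀ z ≠ 0 := hzF f₀ hf₀A
    have hpos : 0 < f₀ c * f₀ z := lt_of_le_of_ne (not_lt.mp h1) (Ne.symm (mul_ne_zero hgc hgz))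
    refine ⟨hf₀A, ?_⟩
    rw [map_neg]
    nlinarith

end JoinAux
end

/-- In an arrangement with the strong lattice property, for atoms `X`, `Y` of an interval
`[C, K]` of `P_C(A)` there is `T = X ∨ Y ∈ [C, K]` such that `X` and `Y` are the only
atoms of the interval `[C, T]`.  (Atoms are the elements covering the minimum `C`.) -/
theorem join_of_atoms_elementary {d : ℕ} (A : Finset (EucV d →ₗ[ℝ] ℝ))
    (hA : ∀ f ∈ A, f ≠ 0)
    (hSL : ∀ C₀ : Set (EucV d), IsChamber A C₀ → ∀ X Y : Set (EucV d),
      IsChamber A X → IsChamber A Y →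
      (∃ J : Set (EucV d), IsChamber A J ∧
        sepSet A C₀ X ⊆ sepSet A C₀ J ∧ sepSet A C₀ Y ⊆ sepSet A C₀ J ∧
        ∀ Z : Set (EucV d), IsChamber A Z → sepSet A C₀ X ⊆ sepSet A C₀ Z →
          sepSet A C₀ Y ⊆ sepSet A C₀ Z → sepSet A C₀ J ⊆ sepSet A C₀ Z) ∧
      (∃ M : Set (EucV d), IsChamber A M ∧
        sepSet A C₀ M ⊆ sepSet A C₀ X ∧ sepSet A C₀ M ⊆ sepSet A C₀ Y ∧
        ∀ Z : Set (EucV d), IsChamber A Z → sepSet A C₀ Z ⊆ sepSet A C₀ X →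
          sepSet A C₀ Z ⊆ sepSet A C₀ Y → sepSet A C₀ Z ⊆ sepSet A C₀ M))
    (C K X Y : Set (EucV d))
    (hC : IsChamber A C) (hK : IsChamber A K) (hX : IsChamber A X) (hY : IsChamber A Y)
    (hCK : sepSet A C C ⊆ sepSet A C K) (hXY : X ≠ Y)
    -- `X` and `Y` are atoms of the interval `[C, K]`:
    (hXatom : X ≠ C ∧ sepSet A C X ⊆ sepSet A C K ∧
      ¬ ∃ W : Set (EucV d), IsChamber A W ∧ W ≠ C ∧ W ≠ X ∧ sepSet A C W ⊆ sepSet A C X)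
    (hYatom : Y ≠ C ∧ sepSet A C Y ⊆ sepSet A C K ∧
      ¬ ∃ W : Set (EucV d), IsChamber A W ∧ W ≠ C ∧ W ≠ Y ∧ sepSet A C W ⊆ sepSet A C Y) :
    ∃ T : Set (EucV d), IsChamber A T ∧
      -- `T ∈ [C, K]`
      sepSet A C T ⊆ sepSet A C K ∧
      -- `T` is the join `X ∨ Y` in `P_C(A)`
      sepSet A C X ⊆ sepSet A C T ∧ sepSet A C Y ⊆ sepSet A C T ∧
      (∀ Z : Set (EucV d), IsChamber A Z → sepSet A C X ⊆ sepSet A C Z →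
        sepSet A C Y ⊆ sepSet A C Z → sepSet A C T ⊆ sepSet A C Z) ∧
      -- `X` and `Y` are the only atoms of `[C, T]`
      (∀ Z : Set (EucV d), IsChamber A Z →
        ((Z ≠ C ∧ sepSet A C Z ⊆ sepSet A C T ∧
          ¬ ∃ W : Set (EucV d), IsChamber A W ∧ W ≠ C ∧ W ≠ Z ∧
            sepSet A C W ⊆ sepSet A C Z) ↔ (Z = X ∨ Z = Y))) := by
  obtain ⟨hXC, hXK, hXnoW⟩ := hXatom
  obtain ⟨hYC, hYK, hYnoW⟩ := hYatom
  obtain ⟨⟨T, hT, hTX, hTY, hTmin⟩, -⟩ := hSL C hC X Y hX hY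
  refine ⟨T, hT, hTmin K hK hXK hYK, hTX, hTY, hTmin, ?_⟩
  intro Z hZ
  constructor
  · rintro ⟨hZC, hZT, hZnoW⟩
    by_contra hcon
    push_neg at hcon
    obtain ⟨hZX, hZY⟩ := hcon
    obtain ⟨c, hc⟩ := JoinAux.chamber_nonempty hC
    obtain ⟨z, hz⟩ := JoinAux.chamber_nonempty hZ
    obtain ⟨hZopp, hZoppSep⟩ := JoinAux.opp_chamber hC hZ hc hz
    set Zo := connectedComponentIn (hypCompl A) (-z) with hZo
    obtain ⟨-, M, hM, hMT, hMZo, hMmax⟩ := hSL C hC T Zo hT hZopp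
    have hXZo : sepSet A C X ⊆ sepSet A C Zo := by
      intro g hgX
      rw [hZoppSep g]
      refine ⟨hgX.1, fun hgZ => ?_⟩
      exact hZX (JoinAux.atoms_disjoint hC hX hZ hXnoW hZnoW hgX hgZ).symm
    have hYZo : sepSet A C Y ⊆ sepSet A C Zo := by
      intro g hgY
      rw [hZoppSep g]
      refine ⟨hgY.1, fun hgZ => ?_⟩
      exact hZY (JoinAux.atoms_disjoint hC hY hZ hYnoW hZnoW hgY hgZ).symm
    have hXM := hMmax X hX hTX hXZo
    have hYM := hMmax Y hY hTY hYZo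
    have hTM := hTmin M hM hXM hYM
    obtain ⟨f, hfZ⟩ := JoinAux.sep_nonempty hC hZ hZC
    exact ((hZoppSep f).mp (hMZo (hTM (hZT hfZ)))).2 hfZ
  · rintro (rfl | rfl)
    · exact ⟨hXC, hTX, hXnoW⟩
    · exact ⟨hYC, hTY, hYnoW⟩
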